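/- Let p be prime and (A_p, f) the affine connected quandle of order p with n the order of t mod p. The number of orbits of Inn(A_p) acting diagonally on A_p × A_p equals 1 + (p-1)/n. (Equivalently, the canonical tensor product A_p ⊗ A_p has cardinality 1 + (p-1)/n.) -/

import Mathlib

namespace Stmt15Aux

variable {p : ℕ}

/-- Affine permutation `x ↦ a*x + b` of `ZMod p`, `a` a unit. -/
def aff (a : (ZMod p)ˣ) (b : ZMod p) : Equiv.Perm (ZMod p) where
  toFun x := (a : ZMod p) * x + b
  invFun x := ((a⁻¹ : (ZMod p)ˣ) : ZMod p) * (x - b)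
  left_inv x := by
    simp only [add_sub_cancel_right, ← mul_assoc, ← Units.val_mul, inv_mul_cancel,
      Units.val_one, one_mul]
  right_inv x := by
    simp only [← mul_assoc, ← Units.val_mul, mul_inv_cancel, Units.val_one, one_mul,
      sub_add_cancel]

@[simp] lemma aff_apply (a : (ZMod p)ˣ) (b x : ZMod p) : aff a b x = (a : ZMod p) * x + b := rfl

lemma aff_mul (a a' : (ZMod p)ˣ) (b b' : ZMod p) :
    aff a b * aff a' b' = aff (a * a') ((a : ZMod p) * b' + b) := by
  ext x
  simp [aff_apply, Equiv.Perm.mul_apply, Units.val_mul]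
  ring

lemma aff_one : (aff 1 0 : Equiv.Perm (ZMod p)) = 1 := by
  ext x; simp

lemma aff_inv (a : (ZMod p)ˣ) (b : ZMod p) :
    (aff a b)⁻¹ = aff a⁻¹ (-(((a⁻¹ : (ZMod p)ˣ) : ZMod p) * b)) := by
  ext x
  show ((a⁻¹ : (ZMod p)ˣ) : ZMod p) * (x - b) = _
  simp [aff_apply]
  ring

/-- `a ↦ aff a 0` as a monoid hom. -/
def affHom : (ZMod p)ˣ →* Equiv.Perm (ZMod p) where
  toFun a := aff a 0
  map_one' := aff_one
  map_mul' a a' := by rw [aff_mul]; simp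

end Stmt15Aux

open Stmt15Aux in
/-- For `p` prime and the affine connected quandle `(A_p, f)` with `t` of
order `n` mod `p`, the number of orbits of `Inn(A_p)` (the group of permutations of `Z_p`
generated by the right translations `R_j : x ↦ t*x + (1-t)*j`) acting diagonally on
`A_p × A_p` equals `1 + (p-1)/n`; equivalently `|A_p ⊗ A_p| = 1 + (p-1)/n`. -/
theorem stmt15 (p n : ℕ) (hp : p.Prime) (t : ZMod p) (ht0 : t ≠ 0) (ht1 : t ≠ 1)
    (horder : orderOf t = n)
    (Inn : Subgroup (Equiv.Perm (ZMod p)))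
    (hInn : Inn = Subgroup.closure
      {σ : Equiv.Perm (ZMod p) | ∃ j : ZMod p, ∀ x, σ x = t * x + (1 - t) * j}) :
    Nat.card (MulAction.orbitRel.Quotient Inn (ZMod p × ZMod p)) = 1 + (p - 1) / n := by
  haveI : Fact p.Prime := ⟨hp⟩
  set u : (ZMod p)ˣ := Units.mk0 t ht0 with hu
  have hut : (u : ZMod p) = t := rfl
  have h1t : (1 : ZMod p) - t ≠ 0 := sub_ne_zero.mpr (Ne.symm ht1)
  -- every element of Inn is affine with slope a power of u
  have hmem : ∀ σ : Equiv.Perm (ZMod p), σ ∈ Inn →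
      ∃ (k : ℤ) (b : ZMod p), σ = aff (u ^ k) b := by
    rw [hInn]
    intro σ hσ
    induction hσ using Subgroup.closure_induction with
    | mem x hx =>
      obtain ⟨j, hj⟩ := hx
      exact ⟨1, (1 - t) * j, by ext y; simp [hj, hut]⟩
    | one => exact ⟨0, 0, by simp [aff_one]⟩
    | mul x y hx hy ihx ihy =>
      obtain ⟨k, b, rfl⟩ := ihx
      obtain ⟨k', b', rfl⟩ := ihy
      exact ⟨k + k', ((u ^ k : (ZMod p)ˣ) : ZMod p) * b' + b, by rw [aff_mul, ← zpow_add]⟩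
    | inv x hx ihx =>
      obtain ⟨k, b, rfl⟩ := ihx
      exact ⟨-k, -(((u ^ k)⁻¹ : (ZMod p)ˣ) : ZMod p) * b, by rw [aff_inv, ← zpow_neg]; ring_nf⟩
  -- conversely all such affine maps belong to Inn
  have hgen : ∀ c : ZMod p, aff u c ∈ Inn := by
    intro c
    rw [hInn]
    apply Subgroup.subset_closure
    refine ⟨c / (1 - t), fun x => ?_⟩
    rw [aff_apply, hut, mul_div_cancel₀ _ h1t]
  have htrans : ∀ b : ZMod p, aff 1 b ∈ Inn := by
    intro b
    have h := mul_mem (hgen b) (inv_mem (hgen 0))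
    rwa [aff_inv, aff_mul, mul_inv_cancel, mul_zero, neg_zero, mul_zero, zero_add] at h
  have hpow : ∀ k : ℤ, aff (u ^ k) 0 ∈ Inn := by
    intro k
    have h := zpow_mem (hgen 0) k
    have : (aff u 0) ^ k = aff (u ^ k) 0 := by
      have := map_zpow (affHom (p := p)) u k
      simpa [affHom] using this.symm
    rwa [this] at h
  have haff : ∀ (k : ℤ) (b : ZMod p), aff (u ^ k) b ∈ Inn := by
    intro k b
    have h := mul_mem (htrans b) (hpow k)
    rw [aff_mul] at h
    simpa using h
  -- orbit relation characterization
  have horb : ∀ z w : ZMod p × ZMod p,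
      (MulAction.orbitRel Inn (ZMod p × ZMod p)).r z w ↔
        ∃ k : ℤ, z.2 - z.1 = ((u ^ k : (ZMod p)ˣ) : ZMod p) * (w.2 - w.1) := by
    intro z w
    constructor
    · rintro ⟨⟨σ, hσ⟩, rfl⟩
      obtain ⟨k, b, rfl⟩ := hmem σ hσ
      refine ⟨k, ?_⟩
      show aff (u ^ k) b w.2 - aff (u ^ k) b w.1 = _
      simp [aff_apply]
      ring
    · rintro ⟨k, hk⟩
      refine ⟨⟨aff (u ^ k) (z.1 - ((u ^ k : (ZMod p)ˣ) : ZMod p) * w.1), haff k _⟩, ?_⟩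
      show (aff (u ^ k) _ w.1, aff (u ^ k) _ w.2) = z
      have h2 : ((u ^ k : (ZMod p)ˣ) : ZMod p) * w.2 +
          (z.1 - ((u ^ k : (ZMod p)ˣ) : ZMod p) * w.1) = z.2 := by
        have : z.2 = z.1 + ((u ^ k : (ZMod p)ˣ) : ZMod p) * (w.2 - w.1) := by
          rw [← hk]; ring
        rw [this]; ring
      have h1 : ((u ^ k : (ZMod p)ˣ) : ZMod p) * w.1 +
          (z.1 - ((u ^ k : (ZMod p)ˣ) : ZMod p) * w.1) = z.1 := by ring
      exact Prod.ext (by simpa [aff_apply] using h1) (by simpa [aff_apply] using h2)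
  -- the target quotient group
  set Q := (ZMod p)ˣ ⧸ Subgroup.zpowers u with hQ
  -- the map
  let g : ZMod p × ZMod p → Option Q := fun z =>
    if h : z.2 - z.1 = 0 then none
    else some (QuotientGroup.mk (Units.mk0 (z.2 - z.1) h))
  have hgrel : ∀ z w, (MulAction.orbitRel Inn (ZMod p × ZMod p)).r z w → g z = g w := by
    intro z w hzw
    obtain ⟨k, hk⟩ := (horb z w).mp hzw
    by_cases h : w.2 - w.1 = 0
    · have hz : z.2 - z.1 = 0 := by rw [hk, h, mul_zero]
      simp [g, h, hz]
    · have hz : z.2 - z.1 ≠ 0 := by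
        rw [hk]; exact mul_ne_zero (Units.ne_zero _) h
      simp only [g, dif_neg h, dif_neg hz, Option.some.injEq]
      have hunit : Units.mk0 (z.2 - z.1) hz = u ^ k * Units.mk0 (w.2 - w.1) h :=
        Units.ext (by simp [hk])
      rw [hunit, mul_comm,
        QuotientGroup.mk_mul_of_mem _ (Subgroup.mem_zpowers_iff.mpr ⟨k, rfl⟩)]
  let G : MulAction.orbitRel.Quotient Inn (ZMod p × ZMod p) → Option Q :=
    Quotient.lift g hgrel
  have hbij : Function.Bijective G := by
    constructor
    · intro a b
      induction a using Quotient.ind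
      induction b using Quotient.ind
      rename_i z w
      intro hgw
      have hgw' : g z = g w := hgw
      apply Quotient.sound'
      show (MulAction.orbitRel Inn (ZMod p × ZMod p)).r z w
      rw [horb]
      by_cases h : w.2 - w.1 = 0
      · by_cases hz : z.2 - z.1 = 0
        · exact ⟨0, by rw [hz, h, mul_zero]⟩
        · simp [g, h, hz] at hgw'
      · by_cases hz : z.2 - z.1 = 0
        · simp [g, h, hz] at hgw'
        · simp only [g, dif_neg h, dif_neg hz, Option.some.injEq] at hgw'
          rw [QuotientGroup.eq] at hgw'
          obtain ⟨k, hk⟩ := hgw'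
          have hk2 : u ^ k = (Units.mk0 (z.2 - z.1) hz)⁻¹ * Units.mk0 (w.2 - w.1) h := hk
          have hk' : Units.mk0 (w.2 - w.1) h = Units.mk0 (z.2 - z.1) hz * u ^ k := by
            rw [hk2]; group
          have hzw : Units.mk0 (z.2 - z.1) hz = u ^ (-k) * Units.mk0 (w.2 - w.1) h := by
            rw [hk', mul_comm (Units.mk0 (z.2 - z.1) hz), zpow_neg, inv_mul_cancel_left]
          exact ⟨-k, by simpa using congrArg Units.val hzw⟩
    · intro q
      match q with
      | none => exact ⟨Quotient.mk _ (0, 0), by simp [G, g]⟩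
      | some c =>
        induction c using Quotient.ind
        rename_i v
        refine ⟨Quotient.mk _ (0, (v : ZMod p)), ?_⟩
        have hv : ((v : ZMod p) - 0) ≠ 0 := by simpa using v.ne_zero
        show g (0, (v : ZMod p)) = _
        simp only [g, dif_neg hv, Option.some.injEq]
        congr 1
        exact Units.ext (by simp)
  have hcardG : Nat.card (MulAction.orbitRel.Quotient Inn (ZMod p × ZMod p)) =
      Nat.card (Option Q) := Nat.card_eq_of_bijective G hbij
  -- counting Q
  have hordu : orderOf u = n := by rw [← horder, ← hut, orderOf_units]
  have hcards : Nat.card (ZMod p)ˣ = Nat.card Q * n := by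
    rw [Subgroup.card_eq_card_quotient_mul_card_subgroup (Subgroup.zpowers u)]
    rw [Nat.card_zpowers, hordu]
  have hunits : Nat.card (ZMod p)ˣ = p - 1 := by
    rw [Nat.card_eq_fintype_card, ZMod.card_units p]
  have hn : 0 < n := by
    rw [← hordu]; exact orderOf_pos u
  have hdiv : (p - 1) / n = Nat.card Q := by
    rw [← hunits, hcards, Nat.mul_div_cancel _ hn]
  rw [hcardG, Finite.card_option, hdiv]
  omega
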